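/- If a normalized block sequence (x_1,...,x_{n²}) in a Banach space with a bimonotone basis is 2-equivalent to the unit vector basis of ℓ₁^{n²}, then the vector x = (1/n²)·(x_1 + ... + x_{n²}) satisfies ‖x‖ ≥ 1/2 and, for every sequence of intervals E_1 < E_2 < ... < E_n of ℕ, ∑_{j=1}^n ‖E_j x‖ ≤ 2. -/

import Mathlib

open Finset in
/-- The restriction `Ex` of a finitely supported vector `x` to the coordinates in `E`. -/
noncomputable def restrictF (x : ℕ →₀ ℝ) (E : Finset ℕ) : ℕ →₀ ℝ :=
  Finsupp.filter (· ∈ E) x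

/-- A (Banach) space with a bimonotone Schauder basis, modelled on the linear span of the
basis: the space of finitely supported real sequences endowed with a norm `N` for which
restrictions to intervals have norm at most the norm of the vector. -/
structure BmBasis where
  N : (ℕ →₀ ℝ) → ℝ
  norm_nonneg : ∀ x, 0 ≤ N x
  norm_eq_zero_iff : ∀ x, N x = 0 ↔ x = 0
  norm_add_le : ∀ x y, N (x + y) ≤ N x + N y
  norm_smul : ∀ (a : ℝ) (x), N (a • x) = |a| * N x
  bimono : ∀ (x : ℕ →₀ ℝ) (a b : ℕ), N (restrictF x (Finset.Icc a b)) ≤ N x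

/-- A (finite) block sequence: nonzero vectors with successive supports. -/
def IsBlockSeq {k : ℕ} (x : Fin k → (ℕ →₀ ℝ)) : Prop :=
  (∀ i, x i ≠ 0) ∧
  ∀ i j : Fin k, i < j → ∀ p ∈ (x i).support, ∀ q ∈ (x j).support, p < q

/-- A sequence of successive intervals `E₁ < E₂ < ... < E_n` of `ℕ`. -/
def IsSuccIntervals {n : ℕ} (E : Fin n → Finset ℕ) : Prop :=
  (∀ j, ∃ a b : ℕ, E j = Finset.Icc a b) ∧
  ∀ j j' : Fin n, j < j' → ∀ p ∈ E j, ∀ q ∈ E j', p < q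

lemma BmBasis.norm_zero (B : BmBasis) : B.N 0 = 0 := (B.norm_eq_zero_iff 0).mpr rfl

lemma BmBasis.norm_sum_le (B : BmBasis) {ι : Type*} (s : Finset ι) (f : ι → ℕ →₀ ℝ) :
    B.N (∑ i ∈ s, f i) ≤ ∑ i ∈ s, B.N (f i) := by
  classical
  induction s using Finset.cons_induction with
  | empty => simp [B.norm_zero]
  | cons a s ha ih =>
    rw [Finset.sum_cons, Finset.sum_cons]
    exact le_trans (B.norm_add_le _ _) (by linarith)

/-- if a normalized block sequence `(x₁,...,x_{n²})` in a space with a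
bimonotone basis is 2-equivalent to the unit vector basis of `ℓ₁^{n²}`, then
`x = (1/n²)(x₁ + ... + x_{n²})` satisfies `‖x‖ ≥ 1/2` and `∑_{j=1}^n ‖E_j x‖ ≤ 2` for all
successive intervals `E₁ < ... < E_n`. -/
theorem lemma1_glue_vector (B : BmBasis) (n : ℕ) (hn : 0 < n)
    (x : Fin (n ^ 2) → (ℕ →₀ ℝ)) (hblock : IsBlockSeq x)
    (hnorm : ∀ i, B.N (x i) = 1)
    (hl1 : ∀ a : Fin (n ^ 2) → ℝ, ∑ i, |a i| ≤ 2 * B.N (∑ i, a i • x i)) :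
    (1 : ℝ) / 2 ≤ B.N (((n : ℝ) ^ 2)⁻¹ • ∑ i, x i) ∧
      ∀ E : Fin n → Finset ℕ, IsSuccIntervals E →
        ∑ j, B.N (restrictF (((n : ℝ) ^ 2)⁻¹ • ∑ i, x i) (E j)) ≤ 2 := by
  classical
  have hn2 : (0 : ℝ) < (n : ℝ) ^ 2 := by positivity
  constructor
  · have h := hl1 (fun _ => ((n : ℝ) ^ 2)⁻¹)
    have h1 : ∑ _i : Fin (n ^ 2), |((n : ℝ) ^ 2)⁻¹| = 1 := by
      rw [Finset.sum_const, Finset.card_univ, Fintype.card_fin, abs_of_pos (by positivity)]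
      field_simp
      rw [nsmul_eq_mul, Nat.cast_pow, one_div, mul_inv_cancel₀ hn2.ne']
    have h2 : (∑ i : Fin (n ^ 2), ((n : ℝ) ^ 2)⁻¹ • x i)
        = ((n : ℝ) ^ 2)⁻¹ • ∑ i, x i := (Finset.smul_sum).symm
    rw [h1, h2] at h
    linarith
  · intro E hE
    -- `S j` is the set of indices `i` whose block `x i` meets the interval `E j`.
    set S : Fin n → Finset (Fin (n ^ 2)) :=
      fun j => Finset.univ.filter (fun i => ∃ q ∈ (x i).support, q ∈ E j) with hS
    have hmemS : ∀ j i, i ∈ S j ↔ ∃ q ∈ (x i).support, q ∈ E j := by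
      intro j i; simp [hS]
    -- monotonicity: blocks meeting earlier intervals have smaller indices
    have hmono : ∀ j j' : Fin n, j < j' → ∀ i ∈ S j, ∀ i' ∈ S j', i ≤ i' := by
      intro j j' hjj' i hi i' hi'
      obtain ⟨p, hp, hpE⟩ := (hmemS j i).mp hi
      obtain ⟨q, hq, hqE⟩ := (hmemS j' i').mp hi'
      by_contra hlt
      push_neg at hlt
      have h1 : p < q := hE.2 j j' hjj' p hpE q hqE
      have h2 : q < p := hblock.2 i' i hlt q hq p hp
      omega
    -- counting: ∑ j, |S j| ≤ n² + n
    have hcard : ∑ j, (S j).card ≤ n ^ 2 + n := by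
      have hsig : (Finset.univ.sigma S).card = ∑ j, (S j).card := Finset.card_sigma _ _
      rw [← hsig]
      have hinj : ∀ z ∈ Finset.univ.sigma S, ∀ z' ∈ Finset.univ.sigma S,
          (fun z : Σ _j : Fin n, Fin (n ^ 2) =>
              if ∃ j', z.1 < j' ∧ z.2 ∈ S j' then (Sum.inr z.1 : Fin (n ^ 2) ⊕ Fin n)
              else Sum.inl z.2) z =
            (fun z : Σ _j : Fin n, Fin (n ^ 2) =>
              if ∃ j', z.1 < j' ∧ z.2 ∈ S j' then (Sum.inr z.1 : Fin (n ^ 2) ⊕ Fin n)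
              else Sum.inl z.2) z' → z = z' := by
        rintro ⟨j, i⟩ hz ⟨j', i'⟩ hz' heq
        simp only [Finset.mem_sigma, Finset.mem_univ, true_and] at hz hz'
        by_cases c1 : ∃ j₁, j < j₁ ∧ i ∈ S j₁ <;> by_cases c2 : ∃ j₂, j' < j₂ ∧ i' ∈ S j₂ <;>
          simp only [c1, c2, if_pos, if_neg, if_true, if_false] at heq
        · -- both mapped to inr : j = j', and then i = i' by monotonicity
          have hj : j = j' := by simpa using heq
          subst hj
          obtain ⟨j₁, hj₁, hi₁⟩ := c1
          obtain ⟨j₂, hj₂, hi₂⟩ := c2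
          have h1 : i ≤ i' := hmono j j₂ hj₂ i hz i' hi₂
          have h2 : i' ≤ i := hmono j j₁ hj₁ i' hz' i hi₁
          have : i = i' := le_antisymm h1 h2
          subst this; rfl
        · exact absurd heq (by simp)
        · exact absurd heq (by simp)
        · -- both mapped to inl : i = i', and then j = j'
          have hi : i = i' := by simpa using heq
          subst hi
          rcases lt_trichotomy j j' with h | h | h
          · exact absurd ⟨j', h, hz'⟩ c1
          · subst h; rfl
          · exact absurd ⟨j, h, hz⟩ c2
      have := Finset.card_le_card_of_injOn _ (fun z _ => Finset.mem_univ _) hinj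
      simpa using this
    -- pointwise bound on each interval's norm
    have hj_bound : ∀ j, B.N (restrictF (((n : ℝ) ^ 2)⁻¹ • ∑ i, x i) (E j))
        ≤ ((n : ℝ) ^ 2)⁻¹ * (S j).card := by
      intro j
      obtain ⟨a, b, hEj⟩ := hE.1 j
      have hsplit : restrictF (((n : ℝ) ^ 2)⁻¹ • ∑ i, x i) (E j)
          = ((n : ℝ) ^ 2)⁻¹ • ∑ i ∈ S j, restrictF (x i) (E j) := by
        have hzero : ∀ i ∈ (Finset.univ : Finset (Fin (n ^ 2))), i ∉ S j →
            restrictF (x i) (E j) = 0 := by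
          intro i _ hi
          ext q
          simp only [restrictF, Finsupp.filter_apply, Finsupp.coe_zero, Pi.zero_apply]
          split_ifs with hq
          · by_contra hxq
            exact hi ((hmemS j i).mpr ⟨q, Finsupp.mem_support_iff.mpr hxq, hq⟩)
          · rfl
        rw [restrictF, Finsupp.filter_smul, Finsupp.filter_sum]
        congr 1
        exact (Finset.sum_subset (Finset.subset_univ (S j)) hzero).symm
      rw [hsplit, B.norm_smul, abs_of_pos (by positivity)]
      have hsum : B.N (∑ i ∈ S j, restrictF (x i) (E j)) ≤ (S j).card := by
        calc B.N (∑ i ∈ S j, restrictF (x i) (E j))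
            ≤ ∑ i ∈ S j, B.N (restrictF (x i) (E j)) := B.norm_sum_le _ _
          _ ≤ ∑ _i ∈ S j, (1 : ℝ) := by
              refine Finset.sum_le_sum fun i _ => ?_
              have := B.bimono (x i) a b
              rw [← hEj] at this
              rw [hnorm i] at this
              exact this
          _ = (S j).card := by simp
      have h0 : (0 : ℝ) ≤ ((n : ℝ) ^ 2)⁻¹ := by positivity
      exact mul_le_mul_of_nonneg_left hsum h0
    -- combine
    calc ∑ j, B.N (restrictF (((n : ℝ) ^ 2)⁻¹ • ∑ i, x i) (E j))
        ≤ ∑ j, ((n : ℝ) ^ 2)⁻¹ * (S j).card := Finset.sum_le_sum fun j _ => hj_bound j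
      _ = ((n : ℝ) ^ 2)⁻¹ * ∑ j, ((S j).card : ℝ) := by rw [Finset.mul_sum]
      _ ≤ ((n : ℝ) ^ 2)⁻¹ * ((n : ℝ) ^ 2 + n) := by
          refine mul_le_mul_of_nonneg_left ?_ (by positivity)
          have : (∑ j, ((S j).card : ℝ)) = ((∑ j, (S j).card : ℕ) : ℝ) := by push_cast; rfl
          rw [this]
          calc ((∑ j, (S j).card : ℕ) : ℝ) ≤ ((n ^ 2 + n : ℕ) : ℝ) := by exact_mod_cast hcard
            _ = (n : ℝ) ^ 2 + n := by push_cast; ring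
      _ = 1 + ((n : ℝ))⁻¹ := by field_simp
      _ ≤ 2 := by
          have h1 : (1 : ℝ) ≤ (n : ℝ) := by exact_mod_cast hn
          have : ((n : ℝ))⁻¹ ≤ 1 := by
            rw [inv_le_one_iff₀]; right; exact h1
          linarith
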